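/- (Stratification along exponential segments) Let $\mu_0',\mu_1' \in \mathcal{M}_+(\Omega,\mu_0)$ with $f_i := \log(d\mu_i'/d\mu_0)$, and for $\lambda \in [0,1]$ set $\mu'_\lambda := \exp(f_0 + \lambda(f_1-f_0))\,\mu_0$ (assumed to be finite measures). Then: (1) the measures $\mu'_\lambda$ for $\lambda \in (0,1)$ are all similar to each other; (2) $\mu'_\lambda \preceq \mu'_0$ and $\mu'_\lambda \preceq \mu'_1$ for $\lambda \in (0,1)$, where $\mu' \preceq \mu$ means $d\mu'/d\mu \in L^p(\mu)$ for some $p > 1$. -/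

import Mathlib

open MeasureTheory

private lemma arith {l c : ℝ} (hl : l ∈ Set.Icc (0:ℝ) 1) (hlc : l + c ∈ Set.Ioo (0:ℝ) 1) :
    ∃ p : ℝ, 1 < p ∧ l + p * c ∈ Set.Icc (0:ℝ) 1 := by
  obtain ⟨hl0, hl1⟩ := hl
  obtain ⟨h0, h1⟩ := hlc
  rcases lt_trichotomy c 0 with hc | hc | hc
  · refine ⟨(1 + l / (-c)) / 2, ?_, ?_, ?_⟩
    · have : 1 < l / (-c) := (one_lt_div (by linarith)).2 (by linarith)
      linarith
    · have hq : ((1 + l / (-c)) / 2) * (-c) ≤ (l / (-c)) * (-c) := by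
        apply mul_le_mul_of_nonneg_right _ (by linarith)
        have : 1 < l / (-c) := (one_lt_div (by linarith)).2 (by linarith)
        linarith
      rw [div_mul_cancel₀ _ (by linarith : (-c) ≠ 0)] at hq
      nlinarith
    · nlinarith [(one_lt_div (by linarith : (0:ℝ) < -c)).2 (by linarith : -c < l)]
  · exact ⟨2, one_lt_two, by simpa [hc] using ⟨hl0, hl1⟩⟩
  · refine ⟨(1 + (1 - l) / c) / 2, ?_, ?_, ?_⟩
    · have : 1 < (1 - l) / c := (one_lt_div hc).2 (by linarith)
      linarith
    · nlinarith [(one_lt_div hc).2 (by linarith : c < 1 - l)]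
    · have hq : ((1 + (1 - l) / c) / 2) * c ≤ ((1 - l) / c) * c := by
        apply mul_le_mul_of_nonneg_right _ hc.le
        have : 1 < (1 - l) / c := (one_lt_div hc).2 (by linarith)
        linarith
      rw [div_mul_cancel₀ _ (by linarith : c ≠ 0)] at hq
      linarith

private lemma key {Ω : Type*} [MeasurableSpace Ω] (μ0 : Measure Ω)
    (f0 f1 : Ω → ℝ) (hf0 : Measurable f0) (hf1 : Measurable f1)
    (hint : ∀ l ∈ Set.Icc (0:ℝ) 1,
      Integrable (fun ω => Real.exp (f0 ω + l * (f1 ω - f0 ω))) μ0)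
    {l c : ℝ} (hl : l ∈ Set.Icc (0:ℝ) 1) (hlc : l + c ∈ Set.Ioo (0:ℝ) 1) :
    ∃ p : ℝ, 1 < p ∧
      MemLp (fun ω => Real.exp (c * (f1 ω - f0 ω))) (ENNReal.ofReal p)
        (μ0.withDensity fun ω => ENNReal.ofReal (Real.exp (f0 ω + l * (f1 ω - f0 ω)))) := by
  obtain ⟨p, hp, hmem⟩ := arith hl hlc
  refine ⟨p, hp, ?_⟩
  set μ := μ0.withDensity fun ω => ENNReal.ofReal (Real.exp (f0 ω + l * (f1 ω - f0 ω))) with hμ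
  have hg : Measurable fun ω => ENNReal.ofReal (Real.exp (f0 ω + l * (f1 ω - f0 ω))) :=
    (((hf0.add ((hf1.sub hf0).const_mul l)).exp)).ennreal_ofReal
  have hmeas : AEStronglyMeasurable (fun ω => Real.exp (c * (f1 ω - f0 ω))) μ :=
    (((hf1.sub hf0).const_mul c).exp).aestronglyMeasurable
  have q0 : (ENNReal.ofReal p) ≠ 0 := by
    simp [ENNReal.ofReal_eq_zero]; linarith
  have qt : (ENNReal.ofReal p) ≠ ⊤ := ENNReal.ofReal_ne_top
  have hI : Integrable (fun ω => ‖Real.exp (c * (f1 ω - f0 ω))‖ ^ (ENNReal.ofReal p).toReal) μ := by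
    rw [hμ, integrable_withDensity_iff hg (Filter.Eventually.of_forall fun _ => ENNReal.ofReal_lt_top)]
    have heq : (fun ω => ‖Real.exp (c * (f1 ω - f0 ω))‖ ^ (ENNReal.ofReal p).toReal *
        (ENNReal.ofReal (Real.exp (f0 ω + l * (f1 ω - f0 ω)))).toReal) =
        fun ω => Real.exp (f0 ω + (l + p * c) * (f1 ω - f0 ω)) := by
      funext ω
      rw [Real.norm_eq_abs, Real.abs_exp, ENNReal.toReal_ofReal (Real.exp_nonneg _),
        ENNReal.toReal_ofReal (by linarith : (0:ℝ) ≤ p), ← Real.exp_mul, ← Real.exp_add]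
      ring_nf
    rw [heq]
    exact hint _ hmem
  have := (memLp_norm_rpow_iff (p := ENNReal.ofReal p) hmeas q0 qt)
  rw [ENNReal.div_self q0 qt] at this
  exact this.mp (memLp_one_iff_integrable.mpr hI)

/-- Stratification along exponential segments: for `μ'_λ := exp(f₀ + λ(f₁-f₀))·μ₀`
(assumed finite for `λ ∈ [0,1]`), (1) all interior measures `μ'_λ`, `λ ∈ (0,1)`, are
similar to each other, and (2) `μ'_λ ≼ μ'_0` and `μ'_λ ≼ μ'_1` for `λ ∈ (0,1)`,
where `μ' ≼ μ` means the density `dμ'/dμ` lies in `L^p(μ)` for some `p > 1`. -/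
theorem stmt_18 {Ω : Type*} [MeasurableSpace Ω] (μ0 : Measure Ω)
    (f0 f1 : Ω → ℝ) (hf0 : Measurable f0) (hf1 : Measurable f1)
    (hint : ∀ l ∈ Set.Icc (0:ℝ) 1,
      Integrable (fun ω => Real.exp (f0 ω + l * (f1 ω - f0 ω))) μ0)
    (μ' : ℝ → Measure Ω)
    (hμ' : ∀ l, μ' l = μ0.withDensity
      fun ω => ENNReal.ofReal (Real.exp (f0 ω + l * (f1 ω - f0 ω)))) :
    -- (1) interior measures are all similar: each has an `L^p`-density, `p > 1`,
    -- with respect to any other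
    (∀ l₁ ∈ Set.Ioo (0:ℝ) 1, ∀ l₂ ∈ Set.Ioo (0:ℝ) 1,
      ∃ p : ℝ, 1 < p ∧
        MemLp (fun ω => Real.exp ((l₁ - l₂) * (f1 ω - f0 ω)))
          (ENNReal.ofReal p) (μ' l₂)) ∧
    -- (2) each interior measure is dominated in the sense `≼` by both endpoints
    (∀ l ∈ Set.Ioo (0:ℝ) 1,
      (∃ p : ℝ, 1 < p ∧
        MemLp (fun ω => Real.exp (l * (f1 ω - f0 ω)))
          (ENNReal.ofReal p) (μ' 0)) ∧
      (∃ p : ℝ, 1 < p ∧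
        MemLp (fun ω => Real.exp ((l - 1) * (f1 ω - f0 ω)))
          (ENNReal.ofReal p) (μ' 1))) := by
  constructor
  · intro l₁ hl₁ l₂ hl₂
    rw [hμ' l₂]
    exact key μ0 f0 f1 hf0 hf1 hint (Set.mem_Icc_of_Ioo hl₂)
      (by simpa using hl₁)
  · intro l hl
    constructor
    · rw [hμ' 0]
      exact key μ0 f0 f1 hf0 hf1 hint (by norm_num) (by simpa using hl)
    · rw [hμ' 1]
      exact key μ0 f0 f1 hf0 hf1 hint (by norm_num) (by simpa using hl)
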